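/- Let $x$ and $k$ be positive integers, and assume that $k$ is not even whenever $x \equiv 5 \pmod{9}$. Then: (a) if $k = 1$, then $v_3(T_k(x)) = v_3(x)$; (b) if $x \equiv 0 \pmod{3}$ and $k \ge 2$ is even, then $v_3(T_k(x)) = v_3(x) - 1$; (c) if $x \equiv 0 \pmod{3}$ and $k > 3$ is odd, then $v_3(T_k(x)) = v_3(k x^2)$; (d) if $x \equiv 0 \pmod{3}$ and $k = 3$, then $v_3(T_k(x)) = v_3(x^2(5x+3))$; (e) if $x \equiv 1$ or $2 \pmod{3}$ and $k \ge 3$ is odd, then $v_3(T_k(x)) = 0$; (f) if $x \equiv 2$ or $8 \pmod{9}$ and $k \ge 2$ is even, then $v_3(T_k(x)) = 0$; (g) if $x \equiv 1 \pmod{3}$ and $k \ge 2$ is even, then $v_3(T_k(x)) = v_3(2x+1) - 1$. -/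

import Mathlib

/-- `T k x = (x+1)^k + (x+2)^k + ... + (2x)^k`. -/
def T (k x : ℕ) : ℕ := ∑ i ∈ Finset.Icc (x + 1) (2 * x), i ^ k

lemma TIco (k x : ℕ) : T k x = ∑ i ∈ Finset.Ico (x + 1) (2 * x + 1), i ^ k := by
  rw [T, Finset.Ico_add_one_right_eq_Icc]

lemma Trec (k x : ℕ) :
    T k (x + 1) + (x + 1) ^ k = T k x + (2 * x + 1) ^ k + (2 * x + 2) ^ k := by
  rw [TIco, TIco]
  have h1 := Finset.sum_eq_sum_Ico_succ_bot (show x + 1 < 2 * (x + 1) + 1 by omega)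
    (fun i => i ^ k)
  have h2 : ∑ i ∈ Finset.Ico (x + 1) (2 * (x + 1) + 1), i ^ k
      = (∑ i ∈ Finset.Ico (x + 1) (2 * x + 1), i ^ k) + (2 * x + 1) ^ k + (2 * x + 2) ^ k := by
    have e1 : 2 * (x + 1) + 1 = (2 * x + 2) + 1 := by ring
    have e2 : (2 * x + 1) + 1 = 2 * x + 2 := by ring
    rw [e1, Finset.sum_Ico_succ_top (by omega), ← e2, Finset.sum_Ico_succ_top (by omega)]
  omega

lemma T_pos (k x : ℕ) (hx : 0 < x) : 0 < T k x := by
  have h : (x + 1) ∈ Finset.Icc (x + 1) (2 * x) := by simp; omega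
  have h2 : (x + 1) ^ k ≤ T k x :=
    Finset.single_le_sum (f := fun i => i ^ k) (fun i _ => Nat.zero_le _) h
  have h3 : 0 < (x + 1) ^ k := Nat.pow_pos (by omega)
  omega

lemma two_T1 (x : ℕ) : 2 * T 1 x = x * (3 * x + 1) := by
  induction x with
  | zero => decide
  | succ n ih =>
    have h := Trec 1 n
    have : (n + 1) * (3 * (n + 1) + 1) + 2 * (n + 1) ^ 1
        = n * (3 * n + 1) + 2 * (2 * n + 1) ^ 1 + 2 * (2 * n + 2) ^ 1 := by ring
    omega

lemma four_T3 (x : ℕ) : 4 * T 3 x = x ^ 2 * (3 * x + 1) * (5 * x + 3) := by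
  induction x with
  | zero => decide
  | succ n ih =>
    have h := Trec 3 n
    have e : (n + 1) ^ 2 * (3 * (n + 1) + 1) * (5 * (n + 1) + 3) + 4 * (n + 1) ^ 3
        = n ^ 2 * (3 * n + 1) * (5 * n + 3) + 4 * (2 * n + 1) ^ 3 + 4 * (2 * n + 2) ^ 3 := by ring
    omega

lemma opow (k n : ℕ) (hk : Odd k) : n ^ k % 3 = n % 3 := by
  obtain ⟨j, rfl⟩ := hk
  rw [Nat.pow_mod]
  have h : n % 3 = 0 ∨ n % 3 = 1 ∨ n % 3 = 2 := by omega
  rcases h with h | h | h <;> rw [h]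
  · simp [Nat.zero_pow (by omega : 0 < 2 * j + 1)]
  · simp
  · rw [pow_succ, pow_mul, Nat.mul_mod, Nat.pow_mod]
    norm_num

lemma epow (k n : ℕ) (hk0 : 0 < k) (hk : Even k) :
    n ^ k % 3 = if n % 3 = 0 then 0 else 1 := by
  obtain ⟨j, rfl⟩ := hk
  rw [Nat.pow_mod]
  have h : n % 3 = 0 ∨ n % 3 = 1 ∨ n % 3 = 2 := by omega
  have hjj : j + j = 2 * j := by ring
  rcases h with h | h | h <;> rw [h]
  · rw [if_pos rfl, Nat.zero_pow (by omega : 0 < j + j)]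
  · simp
  · rw [if_neg (by omega), hjj, pow_mul, Nat.pow_mod]
    norm_num
lemma Tmod3_odd (k x : ℕ) (hk : Odd k) : T k x % 3 = 2 * x % 3 := by
  induction x with
  | zero => simp [T]
  | succ n ih =>
    have h := Trec k n
    have h1 := opow k (n + 1) hk
    have h2 := opow k (2 * n + 1) hk
    have h3 := opow k (2 * n + 2) hk
    omega

lemma Tmod3_even (k x : ℕ) (h2 : 2 ≤ k) (hk : Even k) :
    T k x % 3 = (x - (x + 1) / 3) % 3 := by
  induction x with
  | zero => simp [T]
  | succ n ih =>
    have h := Trec k n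
    have h1 := epow k (n + 1) (by omega) hk
    have h2 := epow k (2 * n + 1) (by omega) hk
    have h3 := epow k (2 * n + 2) (by omega) hk
    have hn : n % 3 = 0 ∨ n % 3 = 1 ∨ n % 3 = 2 := by omega
    rcases hn with hn | hn | hn
    · rw [if_neg (by omega)] at h1
      rw [if_neg (by omega)] at h2
      rw [if_neg (by omega)] at h3
      omega
    · rw [if_neg (by omega)] at h1
      rw [if_pos (by omega)] at h2
      rw [if_neg (by omega)] at h3
      omega
    · rw [if_pos (by omega)] at h1
      rw [if_neg (by omega)] at h2
      rw [if_pos (by omega)] at h3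
      omega

def Psum (k n : ℕ) : ℕ := ∑ i ∈ Finset.range n, i ^ k

lemma sum_modEq {n : ℕ} (s : Finset ℕ) (f g : ℕ → ℕ)
    (h : ∀ i ∈ s, f i ≡ g i [MOD n]) :
    (∑ i ∈ s, f i) ≡ (∑ i ∈ s, g i) [MOD n] := by
  classical
  induction s using Finset.induction_on with
  | empty => rfl
  | insert _ _ hx ih =>
    rw [Finset.sum_insert hx, Finset.sum_insert hx]
    exact (h _ (Finset.mem_insert_self _ _)).add
      (ih fun i hi => h i (Finset.mem_insert_of_mem hi))

/-- A block of `M` consecutive `k`-th powers is `≡ Psum k M [MOD M]`. -/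
lemma block_modEq (k M : ℕ) : ∀ b, (∑ i ∈ Finset.Ico b (b + M), i ^ k) ≡ Psum k M [MOD M] := by
  intro b
  induction b with
  | zero =>
    unfold Psum
    rw [Finset.range_eq_Ico, Nat.zero_add]
  | succ n ih =>
    have key : (∑ i ∈ Finset.Ico n (n + M), i ^ k) + (n + M) ^ k
        = n ^ k + ∑ i ∈ Finset.Ico (n + 1) (n + 1 + M), i ^ k := by
      have e1 : (∑ i ∈ Finset.Ico n (n + M + 1), i ^ k)
          = (∑ i ∈ Finset.Ico n (n + M), i ^ k) + (n + M) ^ k :=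
        Finset.sum_Ico_succ_top (by omega) _
      have e2 : (∑ i ∈ Finset.Ico n (n + M + 1), i ^ k)
          = n ^ k + ∑ i ∈ Finset.Ico (n + 1) (n + M + 1), i ^ k :=
        Finset.sum_eq_sum_Ico_succ_bot (by omega) _
      rw [show n + 1 + M = n + M + 1 by omega]
      omega
    have hnm : (n + M) ^ k ≡ n ^ k [MOD M] :=
      Nat.ModEq.pow k (Nat.add_mod_right n M)
    have : n ^ k + (∑ i ∈ Finset.Ico (n + 1) (n + 1 + M), i ^ k)
        ≡ n ^ k + Psum k M [MOD M] := by
      calc n ^ k + (∑ i ∈ Finset.Ico (n + 1) (n + 1 + M), i ^ k)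
          = (∑ i ∈ Finset.Ico n (n + M), i ^ k) + (n + M) ^ k := key.symm
        _ ≡ Psum k M + n ^ k [MOD M] := ih.add hnm
        _ = n ^ k + Psum k M := by omega
    exact Nat.ModEq.add_left_cancel' _ this

lemma blocks_modEq (k M b : ℕ) : ∀ q, (∑ i ∈ Finset.Ico b (b + M * q), i ^ k) ≡ q * Psum k M [MOD M] := by
  intro q
  induction q with
  | zero =>
    simp
    rfl
  | succ n ih =>
    have e : (∑ i ∈ Finset.Ico b (b + M * (n + 1)), i ^ k)
        = (∑ i ∈ Finset.Ico b (b + M * n), i ^ k)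
          + ∑ i ∈ Finset.Ico (b + M * n) (b + M * n + M), i ^ k := by
      rw [show b + M * (n + 1) = b + M * n + M by ring]
      exact (Finset.sum_Ico_consecutive _ (by omega : b ≤ b + M * n)
        (by omega : b + M * n ≤ b + M * n + M)).symm
    rw [e, show (n + 1) * Psum k M = n * Psum k M + Psum k M by ring]
    exact ih.add (block_modEq k M _)
lemma mq_zero {M x : ℕ} (h : M ∣ x) : x ≡ 0 [MOD M] := (Nat.modEq_zero_iff_dvd).mpr h

lemma split_modEq (k M q s : ℕ) :
    Psum k (M * q + s) ≡ q * Psum k M + Psum k s [MOD M] := by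
  have e : Psum k (M * q + s)
      = (∑ i ∈ Finset.Ico 0 (M * q), i ^ k) + ∑ i ∈ Finset.Ico (M * q) (M * q + s), i ^ k := by
    unfold Psum
    rw [Finset.range_eq_Ico, ← Finset.sum_Ico_consecutive _ (by omega : 0 ≤ M * q)
      (by omega : M * q ≤ M * q + s)]
  have h1 := blocks_modEq k M 0 q
  rw [Nat.zero_add] at h1
  have h2 : (∑ i ∈ Finset.Ico (M * q) (M * q + s), i ^ k) ≡ Psum k s [MOD M] := by
    rw [Finset.sum_Ico_eq_sum_range, show M * q + s - M * q = s by omega]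
    refine sum_modEq _ _ _ fun i _ => ?_
    have h0 : M * q ≡ 0 [MOD M] := mq_zero ⟨q, rfl⟩
    have := (h0.add_right i).pow k
    simpa using this
  rw [e]
  exact h1.add h2

lemma bin (u c k : ℕ) :
    (u + c) ^ (k + 1) ≡ u ^ (k + 1) + (k + 1) * c * u ^ k [MOD c ^ 2] := by
  induction k with
  | zero =>
    simp
    rfl
  | succ n ih =>
    calc (u + c) ^ (n + 1 + 1) = (u + c) * (u + c) ^ (n + 1) := by ring
      _ ≡ (u + c) * (u ^ (n + 1) + (n + 1) * c * u ^ n) [MOD c ^ 2] := ih.mul_left _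
      _ = (u ^ (n + 2) + (n + 2) * c * u ^ (n + 1)) + ((n + 1) * u ^ n) * c ^ 2 := by ring
      _ ≡ (u ^ (n + 2) + (n + 2) * c * u ^ (n + 1)) + 0 [MOD c ^ 2] :=
        (mq_zero (dvd_mul_left (c ^ 2) ((n + 1) * u ^ n))).add_left _
      _ = u ^ (n + 1 + 1) + (n + 1 + 1) * c * u ^ (n + 1) := by ring

lemma psum_three (k N : ℕ) : Psum k (3 * N)
    = Psum k N + (∑ s ∈ Finset.range N, (s + N) ^ k)
      + ∑ s ∈ Finset.range N, (s + 2 * N) ^ k := by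
  have e1 : (∑ i ∈ Finset.Ico 0 N, i ^ k) = Psum k N := by
    rw [Psum, Finset.range_eq_Ico]
  have e2 : (∑ i ∈ Finset.Ico N (2 * N), i ^ k) = ∑ s ∈ Finset.range N, (s + N) ^ k := by
    rw [Finset.sum_Ico_eq_sum_range, show 2 * N - N = N by omega]
    exact Finset.sum_congr rfl fun i _ => by rw [Nat.add_comm]
  have e3 : (∑ i ∈ Finset.Ico (2 * N) (3 * N), i ^ k) = ∑ s ∈ Finset.range N, (s + 2 * N) ^ k := by
    rw [Finset.sum_Ico_eq_sum_range, show 3 * N - 2 * N = N by omega]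
    exact Finset.sum_congr rfl fun i _ => by rw [Nat.add_comm]
  calc Psum k (3 * N) = ∑ i ∈ Finset.Ico 0 (3 * N), i ^ k := by rw [Psum, Finset.range_eq_Ico]
    _ = (∑ i ∈ Finset.Ico 0 N, i ^ k) + (∑ i ∈ Finset.Ico N (2 * N), i ^ k)
        + ∑ i ∈ Finset.Ico (2 * N) (3 * N), i ^ k := by
        rw [Finset.sum_Ico_consecutive (fun i => i ^ k) (by omega : 0 ≤ N) (by omega : N ≤ 2 * N),
          Finset.sum_Ico_consecutive (fun i => i ^ k) (by omega : 0 ≤ 2 * N)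
            (by omega : 2 * N ≤ 3 * N)]
    _ = _ := by rw [e1, e2, e3]

lemma psum_pow3 (k a : ℕ) (h2 : 2 ≤ k) (hk : Even k) (ha : 1 ≤ a) :
    Psum k (3 ^ a) ≡ 2 * 3 ^ (a - 1) [MOD 3 ^ a] := by
  induction a with
  | zero => omega
  | succ n ih =>
    rcases Nat.eq_or_lt_of_le ha with h | h
    · -- a = 1 case : n = 0
      have hn : n = 0 := by omega
      subst hn
      have : Psum k 3 = 0 ^ k + 1 ^ k + 2 ^ k := by
        unfold Psum
        rw [Finset.sum_range_succ, Finset.sum_range_succ, Finset.sum_range_one]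
      have h0 : (0 : ℕ) ^ k = 0 := Nat.zero_pow (by omega)
      have h1 : (1 : ℕ) ^ k = 1 := one_pow k
      have h2' := epow k 2 (by omega) hk
      norm_num at h2'
      show Psum k 3 % 3 ^ 1 = (2 * 3 ^ 0) % 3 ^ 1
      simp only [pow_one, pow_zero]
      omega
    · -- n ≥ 1
      have hn : 1 ≤ n := by omega
      have IH := ih hn
      obtain ⟨k', rfl⟩ : ∃ k', k = k' + 1 := ⟨k - 1, by omega⟩
      set N := 3 ^ n with hN
      have hdec := psum_three (k' + 1) N
      have hblock : ∀ t : ℕ, 1 ≤ t → t ≤ 2 →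
          (∑ s ∈ Finset.range N, (s + t * N) ^ (k' + 1))
            ≡ Psum (k' + 1) N + (k' + 1) * (t * N) * Psum k' N [MOD 3 ^ (n + 1)] := by
        intro t ht1 ht2
        have hterm : ∀ s ∈ Finset.range N,
            (s + t * N) ^ (k' + 1) ≡ s ^ (k' + 1) + (k' + 1) * (t * N) * s ^ k' [MOD 3 ^ (n + 1)] := by
          intro s _
          refine (bin s (t * N) k').of_dvd ?_
          have : (3:ℕ) ^ (n + 1) ∣ N ^ 2 := by
            rw [hN, ← pow_mul]
            exact pow_dvd_pow 3 (by omega)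
          calc (3:ℕ) ^ (n + 1) ∣ N ^ 2 := this
            _ ∣ (t * N) ^ 2 := pow_dvd_pow_of_dvd (dvd_mul_left N t) 2
        have := sum_modEq _ _ _ hterm
        calc (∑ s ∈ Finset.range N, (s + t * N) ^ (k' + 1))
            ≡ ∑ s ∈ Finset.range N, (s ^ (k' + 1) + (k' + 1) * (t * N) * s ^ k') [MOD 3 ^ (n + 1)] := this
          _ = Psum (k' + 1) N + (k' + 1) * (t * N) * Psum k' N := by
              rw [Finset.sum_add_distrib, ← Finset.mul_sum]
              rfl
      have hb1 := hblock 1 (by omega) (by omega)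
      have hb2 := hblock 2 (by omega) (by omega)
      have hcomb : Psum (k' + 1) (3 * N)
          ≡ 3 * Psum (k' + 1) N + (3 * N) * ((k' + 1) * Psum k' N) [MOD 3 ^ (n + 1)] := by
        rw [hdec]
        calc Psum (k' + 1) N + (∑ s ∈ Finset.range N, (s + N) ^ (k' + 1))
              + ∑ s ∈ Finset.range N, (s + 2 * N) ^ (k' + 1)
            ≡ Psum (k' + 1) N + (Psum (k' + 1) N + (k' + 1) * (1 * N) * Psum k' N)
              + (Psum (k' + 1) N + (k' + 1) * (2 * N) * Psum k' N) [MOD 3 ^ (n + 1)] := by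
              refine Nat.ModEq.add (Nat.ModEq.add_left _ ?_) hb2
              simpa [one_mul] using hb1
          _ = 3 * Psum (k' + 1) N + (3 * N) * ((k' + 1) * Psum k' N) := by ring
      have hzero : (3 * N) * ((k' + 1) * Psum k' N) ≡ 0 [MOD 3 ^ (n + 1)] := by
        refine mq_zero (Dvd.dvd.mul_right ?_ _)
        rw [hN, pow_succ]
        exact ⟨1, by ring⟩
      have h3N : Psum (k' + 1) (3 * N) ≡ 3 * Psum (k' + 1) N [MOD 3 ^ (n + 1)] := by
        calc Psum (k' + 1) (3 * N) ≡ _ [MOD 3 ^ (n + 1)] := hcomb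
          _ ≡ 3 * Psum (k' + 1) N + 0 [MOD 3 ^ (n + 1)] := Nat.ModEq.add_left _ hzero
          _ = 3 * Psum (k' + 1) N := by ring
      have hIH3 : 3 * Psum (k' + 1) N ≡ 3 * (2 * 3 ^ (n - 1)) [MOD 3 ^ (n + 1)] := by
        have := IH.mul_left' (c := 3)
        rwa [show 3 * 3 ^ n = 3 ^ (n + 1) by ring] at this
      have hfin : Psum (k' + 1) (3 * N) ≡ 2 * 3 ^ n [MOD 3 ^ (n + 1)] :=
        calc Psum (k' + 1) (3 * N) ≡ 3 * Psum (k' + 1) N [MOD 3 ^ (n + 1)] := h3N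
          _ ≡ 3 * (2 * 3 ^ (n - 1)) [MOD 3 ^ (n + 1)] := hIH3
          _ = 2 * 3 ^ n := by
              rw [show 3 * (2 * 3 ^ (n - 1)) = 2 * (3 ^ (n - 1) * 3) by ring, ← pow_succ]
              congr 2
              omega
      rw [show 3 * N = 3 ^ (n + 1) by rw [hN]; ring] at hfin
      simpa using hfin
instance fact3 : Fact (Nat.Prime 3) := ⟨by norm_num⟩

lemma negpow {M i j : ℕ} (k : ℕ) (h : M ∣ (i + j)) (hk : Even k) :
    i ^ k ≡ j ^ k [MOD M] := by
  obtain ⟨s, rfl⟩ := hk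
  have h2 : i ^ 2 ≡ j ^ 2 [MOD i + j] := by
    have e : i ^ 2 + j * (i + j) = j ^ 2 + i * (i + j) := by ring
    calc i ^ 2 ≡ i ^ 2 + j * (i + j) [MOD i + j] :=
          ((mq_zero (dvd_mul_left _ j)).add_left (i ^ 2)).symm
      _ = j ^ 2 + i * (i + j) := e
      _ ≡ j ^ 2 + 0 [MOD i + j] := (mq_zero (dvd_mul_left _ i)).add_left _
      _ = j ^ 2 := by ring
  have h3 : i ^ 2 ≡ j ^ 2 [MOD M] := h2.of_dvd h
  have := h3.pow s
  rw [← pow_mul, ← pow_mul] at this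
  rw [show s + s = 2 * s by ring]
  exact this

lemma val_eq {n v c : ℕ} (hn : 0 < n) (h : n ≡ c * 3 ^ v [MOD 3 ^ (v + 1)])
    (hc : ¬ 3 ∣ c) : padicValNat 3 n = v := by
  have hdvd : 3 ^ v ∣ n := by
    have h1 : n ≡ c * 3 ^ v [MOD 3 ^ v] := h.of_dvd (pow_dvd_pow 3 (by omega))
    have h2 : c * 3 ^ v ≡ 0 [MOD 3 ^ v] := mq_zero (dvd_mul_left _ c)
    exact (Nat.modEq_zero_iff_dvd).mp (h1.trans h2)
  have hndvd : ¬ 3 ^ (v + 1) ∣ n := by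
    intro hd
    have h1 : c * 3 ^ v ≡ 0 [MOD 3 ^ (v + 1)] := h.symm.trans (mq_zero hd)
    have h2 : 3 ^ (v + 1) ∣ c * 3 ^ v := (Nat.modEq_zero_iff_dvd).mp h1
    have h3 : 3 ^ v * 3 ∣ 3 ^ v * c := by
      rw [pow_succ] at h2
      rwa [Nat.mul_comm c] at h2
    exact hc ((Nat.mul_dvd_mul_iff_left (by positivity : 0 < 3 ^ v)).mp h3)
  have hle : v ≤ padicValNat 3 n := (padicValNat_dvd_iff_le (by omega)).mp hdvd
  have hlt : ¬ (v + 1 ≤ padicValNat 3 n) := fun hcon =>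
    hndvd ((padicValNat_dvd_iff_le (by omega)).mpr hcon)
  omega

/-- The main even-k lemma: if `3^a ∣ x` then `T k x ≡ (x / 3^a) * (2 * 3^(a-1)) [MOD 3^a]`. -/
lemma T_even_main (k x a : ℕ) (h2 : 2 ≤ k) (hk : Even k) (ha : 1 ≤ a)
    (hd : 3 ^ a ∣ x) :
    T k x ≡ (x / 3 ^ a) * (2 * 3 ^ (a - 1)) [MOD 3 ^ a] := by
  obtain ⟨y, hy⟩ := hd
  subst hy
  set x := 3 ^ a * y with hx
  have e : T k x = ∑ i ∈ Finset.Ico (x + 1) (x + 1 + 3 ^ a * y), i ^ k := by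
    rw [TIco, show 2 * x + 1 = x + 1 + 3 ^ a * y by rw [hx]; omega]
  have h1 := blocks_modEq k (3 ^ a) (x + 1) y
  have h3 := psum_pow3 k a h2 hk ha
  have : T k x ≡ y * (2 * 3 ^ (a - 1)) [MOD 3 ^ a] := by
    rw [e]
    exact h1.trans (h3.mul_left y)
  have hyx : x / 3 ^ a = y := by
    rw [hx]
    exact Nat.mul_div_cancel_left y (by positivity)
  rwa [hyx]
lemma reflect_sum (k A B : ℕ) :
    (∑ i ∈ Finset.Ico (A + 1) (B + 1), i ^ k)
      = ∑ j ∈ Finset.Ico (A + 1) (B + 1), (A + 1 + B - j) ^ k := by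
  refine Finset.sum_nbij' (fun i => A + 1 + B - i) (fun j => A + 1 + B - j) ?_ ?_ ?_ ?_ ?_ <;>
    intro a ha <;> simp only [Finset.mem_Ico] at ha ⊢ <;> try omega
  congr 1
  omega
lemma pair1 (k x : ℕ) :
    (∑ i ∈ Finset.Ico (x + 1) (2 * x + 1), i ^ k)
      = ∑ j ∈ Finset.Ico 1 (x + 1), (2 * x + 1 - j) ^ k := by
  refine Finset.sum_nbij' (fun i => 2 * x + 1 - i) (fun j => 2 * x + 1 - j) ?_ ?_ ?_ ?_ ?_ <;>
    intro a ha <;> simp only [Finset.mem_Ico] at ha ⊢ <;> try omega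
  congr 1
  omega

lemma Ico1_psum (k n : ℕ) (hk : 0 < k) :
    (∑ j ∈ Finset.Ico 1 (n + 1), j ^ k) = Psum k (n + 1) := by
  have := Finset.sum_eq_sum_Ico_succ_bot (show 0 < n + 1 by omega) (fun j => j ^ k)
  rw [Psum, Finset.range_eq_Ico, this, Nat.zero_pow hk, Nat.zero_add]

lemma T_pair (k x b : ℕ) (h2 : 0 < k) (hk : Even k) (hd : 3 ^ b ∣ 2 * x + 1) :
    T k x ≡ Psum k (x + 1) [MOD 3 ^ b] := by
  rw [TIco, pair1]
  have hterm : ∀ j ∈ Finset.Ico 1 (x + 1), (2 * x + 1 - j) ^ k ≡ j ^ k [MOD 3 ^ b] := by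
    intro j hj
    simp only [Finset.mem_Ico] at hj
    refine negpow k ?_ hk
    rwa [show 2 * x + 1 - j + j = 2 * x + 1 by omega]
  calc (∑ j ∈ Finset.Ico 1 (x + 1), (2 * x + 1 - j) ^ k)
      ≡ ∑ j ∈ Finset.Ico 1 (x + 1), j ^ k [MOD 3 ^ b] := sum_modEq _ _ _ hterm
    _ = Psum k (x + 1) := Ico1_psum k x h2

lemma pair2 (k b R : ℕ) (h : 2 * R = 3 ^ b + 1) :
    (∑ i ∈ Finset.Ico R (3 ^ b), i ^ k) = ∑ j ∈ Finset.Ico 1 R, (3 ^ b - j) ^ k := by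
  refine Finset.sum_nbij' (fun i => 3 ^ b - i) (fun j => 3 ^ b - j) ?_ ?_ ?_ ?_ ?_ <;>
    intro a ha <;> simp only [Finset.mem_Ico] at ha ⊢ <;> try omega
  congr 1
  omega

lemma psum_half (k b : ℕ) (h2 : 2 ≤ k) (hk : Even k) (hb : 1 ≤ b) :
    Psum k ((3 ^ b + 1) / 2) ≡ 3 ^ (b - 1) [MOD 3 ^ b] := by
  have hodd : 3 ^ b % 2 = 1 := Nat.odd_iff.mp (Odd.pow (by decide))
  obtain ⟨R, hRR⟩ : ∃ R, 3 ^ b + 1 = 2 * R := ⟨(3 ^ b + 1) / 2, by omega⟩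
  have hRval : (3 ^ b + 1) / 2 = R := by rw [hRR]; omega
  rw [hRval]
  have hR0 : 0 < 2 * R := by rw [← hRR]; positivity
  obtain ⟨R', hR'⟩ : ∃ R', R = R' + 1 := ⟨R - 1, by omega⟩
  have hsplit : Psum k (3 ^ b) = Psum k R + ∑ i ∈ Finset.Ico R (3 ^ b), i ^ k := by
    have e1 : Psum k (3 ^ b) = ∑ i ∈ Finset.Ico 0 (3 ^ b), i ^ k := by
      rw [Psum, Finset.range_eq_Ico]
    have e2 : Psum k R = ∑ i ∈ Finset.Ico 0 R, i ^ k := by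
      rw [Psum, Finset.range_eq_Ico]
    rw [e1, e2]
    exact (Finset.sum_Ico_consecutive _ (by omega) (by omega)).symm
  have hterm : ∀ j ∈ Finset.Ico 1 R, (3 ^ b - j) ^ k ≡ j ^ k [MOD 3 ^ b] := by
    intro j hj
    simp only [Finset.mem_Ico] at hj
    refine negpow k ?_ hk
    rw [show 3 ^ b - j + j = 3 ^ b by omega]
  have hIco : (∑ i ∈ Finset.Ico R (3 ^ b), i ^ k) ≡ Psum k R [MOD 3 ^ b] := by
    rw [pair2 k b R (by omega)]
    calc (∑ j ∈ Finset.Ico 1 R, (3 ^ b - j) ^ k)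
        ≡ ∑ j ∈ Finset.Ico 1 R, j ^ k [MOD 3 ^ b] := sum_modEq _ _ _ hterm
      _ = Psum k R := by rw [hR']; exact Ico1_psum k R' (by omega)
  have hP := psum_pow3 k b h2 hk hb
  have h2P : 2 * Psum k R ≡ 2 * 3 ^ (b - 1) [MOD 3 ^ b] := by
    calc 2 * Psum k R = Psum k R + Psum k R := by ring
      _ ≡ Psum k R + ∑ i ∈ Finset.Ico R (3 ^ b), i ^ k [MOD 3 ^ b] :=
          (Nat.ModEq.add_left _ hIco.symm)
      _ = Psum k (3 ^ b) := hsplit.symm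
      _ ≡ 2 * 3 ^ (b - 1) [MOD 3 ^ b] := hP
  have hcop : Nat.gcd (3 ^ b) 2 = 1 := Nat.Coprime.pow_left b (by decide)
  exact Nat.ModEq.cancel_left_of_coprime hcop h2P
lemma partE (x k : ℕ) (hx : 0 < x) (hk : Odd k) (h1 : x % 3 = 1 ∨ x % 3 = 2) :
    padicValNat 3 (T k x) = 0 := by
  apply padicValNat.eq_zero_of_not_dvd
  have h := Tmod3_odd k x hk
  omega

lemma partF (x k : ℕ) (hx : 0 < x) (h2 : 2 ≤ k) (hk : Even k)
    (h1 : x % 9 = 2 ∨ x % 9 = 8) : padicValNat 3 (T k x) = 0 := by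
  apply padicValNat.eq_zero_of_not_dvd
  have h := Tmod3_even k x h2 hk
  omega

lemma partB (x k : ℕ) (hx : 0 < x) (h2 : 2 ≤ k) (hk : Even k) (h0 : x % 3 = 0) :
    padicValNat 3 (T k x) = padicValNat 3 x - 1 := by
  set a := padicValNat 3 x with hadef
  have ha1 : 1 ≤ a := one_le_padicValNat_of_dvd hx.ne' (by omega)
  have hdvd : 3 ^ a ∣ x := pow_padicValNat_dvd
  have hy3 : ¬ 3 ∣ x / 3 ^ a := by
    intro hcon
    have : 3 ^ (a + 1) ∣ x := by
      have h3 : 3 ^ a * 3 ∣ 3 ^ a * (x / 3 ^ a) := Nat.mul_dvd_mul_left _ hcon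
      rw [Nat.mul_div_cancel' hdvd] at h3
      rwa [pow_succ]
    exact pow_succ_padicValNat_not_dvd (by omega) this
  have hmain := T_even_main k x a h2 hk ha1 hdvd
  have hmain' : T k x ≡ (2 * (x / 3 ^ a)) * 3 ^ (a - 1) [MOD 3 ^ (a - 1 + 1)] := by
    rw [show a - 1 + 1 = a by omega, show (2 * (x / 3 ^ a)) * 3 ^ (a - 1)
      = (x / 3 ^ a) * (2 * 3 ^ (a - 1)) by ring]
    exact hmain
  have := val_eq (T_pos k x hx) hmain' (by
    intro hcon
    rcases (Nat.Prime.dvd_mul (by norm_num)).mp hcon with h | h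
    · omega
    · exact hy3 h)
  omega

lemma partG (x k : ℕ) (hx : 0 < x) (h2 : 2 ≤ k) (hk : Even k) (h1 : x % 3 = 1) :
    padicValNat 3 (T k x) = padicValNat 3 (2 * x + 1) - 1 := by
  set b := padicValNat 3 (2 * x + 1) with hbdef
  have hb1 : 1 ≤ b := one_le_padicValNat_of_dvd (by omega) (by omega)
  have hdvd : 3 ^ b ∣ 2 * x + 1 := pow_padicValNat_dvd
  have hw' : 3 ^ b * ((2 * x + 1) / 3 ^ b) = 2 * x + 1 := Nat.mul_div_cancel' hdvd
  set w := (2 * x + 1) / 3 ^ b with hwdef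
  have hw3 : ¬ 3 ∣ w := by
    intro hcon
    have : 3 ^ (b + 1) ∣ 2 * x + 1 := by
      have h3 : 3 ^ b * 3 ∣ 3 ^ b * w := Nat.mul_dvd_mul_left _ hcon
      rw [hw'] at h3
      rwa [pow_succ]
    exact pow_succ_padicValNat_not_dvd (by omega) this
  -- w is odd
  have hodd3 : 3 ^ b % 2 = 1 := Nat.odd_iff.mp (Odd.pow (by decide))
  have hwodd : w % 2 = 1 := by
    rcases Nat.even_or_odd w with he | ho
    · exfalso
      obtain ⟨t, ht⟩ := he
      have : 3 ^ b * (t + t) % 2 = 1 := by rw [ht] at hw'; rw [hw']; omega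
      have h2' : 3 ^ b * (t + t) % 2 = 0 := by
        rw [show 3 ^ b * (t + t) = 2 * (3 ^ b * t) by ring]
        omega
      omega
    · exact Nat.odd_iff.mp ho
  obtain ⟨q, hq⟩ : ∃ q, w = 2 * q + 1 := ⟨w / 2, by omega⟩
  -- x + 1 = 3^b * q + (3^b+1)/2
  have hR2 : 2 * ((3 ^ b + 1) / 2) = 3 ^ b + 1 := by omega
  have dbl : 2 * (x + 1) = 2 * (3 ^ b * q + (3 ^ b + 1) / 2) := by
    have e1 : 3 ^ b * (2 * q + 1) = 2 * x + 1 := by rw [← hq]; exact hw'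
    have e2 : 3 ^ b * (2 * q + 1) = 2 * (3 ^ b * q) + 3 ^ b := by ring
    calc 2 * (x + 1) = (2 * x + 1) + 1 := by ring
      _ = 2 * (3 ^ b * q) + 3 ^ b + 1 := by rw [← e1, e2]
      _ = 2 * (3 ^ b * q) + 2 * ((3 ^ b + 1) / 2) := by rw [hR2]; ring
      _ = 2 * (3 ^ b * q + (3 ^ b + 1) / 2) := by ring
  have key : x + 1 = 3 ^ b * q + (3 ^ b + 1) / 2 :=
    Nat.eq_of_mul_eq_mul_left (by norm_num) dbl
  have hsplit := split_modEq k (3 ^ b) q ((3 ^ b + 1) / 2)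
  rw [← key] at hsplit
  have hpow3 := psum_pow3 k b h2 hk hb1
  have hhalf := psum_half k b h2 hk hb1
  have hchain : T k x ≡ w * 3 ^ (b - 1) [MOD 3 ^ b] := by
    calc T k x ≡ Psum k (x + 1) [MOD 3 ^ b] := T_pair k x b (by omega) hk hdvd
      _ ≡ q * Psum k (3 ^ b) + Psum k ((3 ^ b + 1) / 2) [MOD 3 ^ b] := hsplit
      _ ≡ q * (2 * 3 ^ (b - 1)) + 3 ^ (b - 1) [MOD 3 ^ b] := (hpow3.mul_left q).add hhalf
      _ = w * 3 ^ (b - 1) := by rw [hq]; ring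
  have hchain' : T k x ≡ w * 3 ^ (b - 1) [MOD 3 ^ (b - 1 + 1)] := by
    rwa [show b - 1 + 1 = b by omega]
  have := val_eq (T_pos k x hx) hchain' hw3
  omega
lemma pow3_ge1 : ∀ v : ℕ, 1 ≤ v → v + 2 ≤ 3 ^ v := by
  intro v
  induction v with
  | zero => omega
  | succ n ih =>
    intro _
    rcases Nat.eq_or_lt_of_le (Nat.zero_le n) with h | h
    · rw [← h]
      norm_num
    · have h1 := ih (by omega)
      have h2 : 3 ^ n + 1 ≤ 3 ^ (n + 1) := by
        have : 3 ^ n * 1 + 1 * 1 ≤ 3 ^ n * 3 := by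
          have : 1 ≤ 3 ^ n := Nat.one_le_pow _ _ (by norm_num)
          omega
        rw [pow_succ]
        omega
      omega

lemma pow3_ge2 : ∀ v : ℕ, 2 ≤ v → v + 3 ≤ 3 ^ v := by
  intro v hv
  have h1 := pow3_ge1 (v - 1) (by omega)
  have h2 : 3 ^ (v - 1) * 3 = 3 ^ v := by
    rw [← pow_succ, show v - 1 + 1 = v by omega]
  have h3 : (v + 1) * 3 ≤ 3 ^ (v - 1) * 3 := by omega
  omega

lemma v3_le (s : ℕ) (hs : 2 ≤ s) : padicValNat 3 s ≤ s - 2 := by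
  set v := padicValNat 3 s with hv
  rcases Nat.eq_zero_or_pos v with h | h
  · omega
  · have h1 := pow3_ge1 v h
    have h2 : 3 ^ v ≤ s := Nat.le_of_dvd (by omega) pow_padicValNat_dvd
    have h3 : v + 2 ≤ s := le_trans h1 h2
    omega

lemma kbound (k V : ℕ) (hk : 3 < k) (hVk : 3 ^ V ∣ k) : V + 3 ≤ k := by
  rcases Nat.lt_or_ge V 2 with h | h
  · omega
  · have h1 := pow3_ge2 V h
    have h2 : 3 ^ V ≤ k := Nat.le_of_dvd (by omega) hVk
    omega

lemma choose_dvd3 (k s V : ℕ) (hs1 : 1 ≤ s) (hsk : s ≤ k) (hVk : 3 ^ V ∣ k) :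
    3 ^ (V - padicValNat 3 s) ∣ Nat.choose k s := by
  set v := padicValNat 3 s with hvdef
  by_cases hle : V ≤ v
  · rw [Nat.sub_eq_zero_of_le hle]
    simp
  · push_neg at hle
    have hid : k * Nat.choose (k - 1) (s - 1) = Nat.choose k s * s := by
      have h := Nat.add_one_mul_choose_eq (k - 1) (s - 1)
      rw [Nat.sub_add_cancel (show 1 ≤ k by omega), Nat.sub_add_cancel (show 1 ≤ s by omega)] at h
      exact h
    have hdvd1 : 3 ^ V ∣ Nat.choose k s * s := by
      rw [← hid]
      exact Dvd.dvd.mul_right hVk _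
    have hsv : 3 ^ v ∣ s := pow_padicValNat_dvd
    set s0 := s / 3 ^ v with hs0def
    have hs0 : 3 ^ v * s0 = s := Nat.mul_div_cancel' hsv
    have hs0nd : ¬ 3 ∣ s0 := by
      intro hcon
      have : 3 ^ (v + 1) ∣ s := by
        have h3 : 3 ^ v * 3 ∣ 3 ^ v * s0 := Nat.mul_dvd_mul_left _ hcon
        rw [hs0] at h3
        rwa [pow_succ]
      exact pow_succ_padicValNat_not_dvd (by omega) this
    have hstep : 3 ^ v * 3 ^ (V - v) ∣ 3 ^ v * (Nat.choose k s * s0) := by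
      rw [← pow_add, show v + (V - v) = V by omega,
        show 3 ^ v * (Nat.choose k s * s0) = Nat.choose k s * (3 ^ v * s0) by ring, hs0]
      exact hdvd1
    have hdvd2 : 3 ^ (V - v) ∣ Nat.choose k s * s0 :=
      (Nat.mul_dvd_mul_iff_left (by positivity : 0 < 3 ^ v)).mp hstep
    have hcop : Nat.Coprime (3 ^ (V - v)) s0 :=
      Nat.Coprime.pow_left _ ((Nat.Prime.coprime_iff_not_dvd (by norm_num)).mpr hs0nd)
    exact hcop.dvd_of_dvd_mul_right hdvd2
lemma err (k V m p i : ℕ) (hVk : 3 ^ V ∣ k) (hkodd : Odd k) (hk3 : 3 ≤ k)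
    (hp : 3 ^ m ∣ p) (hm : 1 ≤ m) (hi : i ≤ p) :
    i ^ k + (p - i) ^ k ≡ k * p * i ^ (k - 1) [MOD 3 ^ (V + 2 * m)] := by
  rw [Nat.ModEq.comm, Nat.modEq_iff_dvd]
  have hcast : ((i ^ k + (p - i) ^ k : ℕ) : ℤ)
      = (i : ℤ) ^ k + ((p : ℤ) - (i : ℤ)) ^ k := by
    push_cast [Nat.cast_sub hi]
    ring
  rw [hcast]
  push_cast
  set I := (i : ℤ) with hI
  set P := (p : ℤ) with hP
  obtain ⟨k2, rfl⟩ : ∃ k2, k = k2 + 2 := ⟨k - 2, by omega⟩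
  set k' := k2 + 2 with hk'
  -- binomial expansion of (P - I)^k
  have hbin : (P - I) ^ k' = ∑ t ∈ Finset.range (k' + 1),
      (-I) ^ t * P ^ (k' - t) * (Nat.choose k' t : ℤ) := by
    rw [show P - I = -I + P by ring]
    exact add_pow (-I) P k'
  have hsplit : (∑ t ∈ Finset.range (k' + 1), (-I) ^ t * P ^ (k' - t) * (Nat.choose k' t : ℤ))
      = (∑ t ∈ Finset.range (k2 + 1), (-I) ^ t * P ^ (k' - t) * (Nat.choose k' t : ℤ))
        + (-I) ^ (k2 + 1) * P ^ (k' - (k2 + 1)) * (Nat.choose k' (k2 + 1) : ℤ)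
        + (-I) ^ (k2 + 2) * P ^ (k' - (k2 + 2)) * (Nat.choose k' (k2 + 2) : ℤ) := by
    rw [show k' + 1 = (k2 + 1) + 1 + 1 by omega, Finset.sum_range_succ, Finset.sum_range_succ]
  have hkodd' : Odd k' := hkodd
  have heven : Even (k2 + 1) := by
    rcases Nat.even_or_odd (k2 + 1) with h | h
    · exact h
    · exfalso
      have : Even (k2 + 2) := by
        obtain ⟨r, hr⟩ := h
        exact ⟨r + 1, by omega⟩
      exact (Nat.not_odd_iff_even.mpr this) hkodd'
  have hT1 : (-I) ^ (k2 + 1) * P ^ (k' - (k2 + 1)) * (Nat.choose k' (k2 + 1) : ℤ)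
      = (k' : ℤ) * P * I ^ (k' - 1) := by
    rw [heven.neg_pow, show k' - (k2 + 1) = 1 by omega, Nat.choose_succ_self_right,
      show k' - 1 = k2 + 1 by omega]
    rw [hk']
    push_cast
    ring
  have hT2 : (-I) ^ (k2 + 2) * P ^ (k' - (k2 + 2)) * (Nat.choose k' (k2 + 2) : ℤ) = -(I ^ k') := by
    have hodd2 : Odd (k2 + 2) := hkodd'
    rw [hodd2.neg_pow, show k' - (k2 + 2) = 0 by omega, show Nat.choose k' (k2 + 2) = 1 by
      rw [hk']; exact Nat.choose_self _]
    push_cast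
    ring
  -- the sum of low-order terms is divisible
  have hsum : ((3 : ℤ) ^ (V + 2 * m)) ∣
      ∑ t ∈ Finset.range (k2 + 1), (-I) ^ t * P ^ (k' - t) * (Nat.choose k' t : ℤ) := by
    refine Finset.dvd_sum ?_
    intro t ht
    simp only [Finset.mem_range] at ht
    have hs2 : 2 ≤ k' - t := by omega
    have hsk : k' - t ≤ k' := by omega
    set s := k' - t with hs
    obtain ⟨s2, hs2'⟩ : ∃ s2, s = s2 + 2 := ⟨s - 2, by omega⟩
    set v3s := padicValNat 3 s with hv3s
    have hc : 3 ^ (V - v3s) ∣ Nat.choose k' t := by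
      have h1 := choose_dvd3 k' s V (by omega) hsk hVk
      rwa [show Nat.choose k' s = Nat.choose k' t by
        rw [show t = k' - s by omega]
        exact (Nat.choose_symm hsk).symm] at h1
    have hps : (3 : ℕ) ^ (m * s) ∣ p ^ s := by
      rw [pow_mul]
      exact pow_dvd_pow_of_dvd hp s
    have haux : v3s + 2 * m ≤ m * s := by
      have h1 : v3s ≤ s2 := by
        have := v3_le s (by omega)
        omega
      have h2 : s2 ≤ m * s2 := Nat.le_mul_of_pos_left s2 (by omega)
      calc v3s + 2 * m ≤ m * s2 + 2 * m := by omega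
        _ = m * (s2 + 2) := by ring
        _ = m * s := by rw [← hs2']
    have hexp : V + 2 * m ≤ (V - v3s) + m * s := by
      calc V + 2 * m ≤ (V - v3s) + (v3s + 2 * m) := by omega
        _ ≤ (V - v3s) + m * s := Nat.add_le_add_left haux _
    have hdc : ((3 : ℤ)) ^ (V - v3s) ∣ (Nat.choose k' t : ℤ) := by
      exact_mod_cast Int.natCast_dvd_natCast.mpr hc
    have hdp : ((3 : ℤ)) ^ (m * s) ∣ P ^ s := by
      rw [hP]
      exact_mod_cast Int.natCast_dvd_natCast.mpr hps
    have h1 : (3 : ℤ) ^ (V - v3s) * (3 : ℤ) ^ (m * s) ∣ (Nat.choose k' t : ℤ) * P ^ s :=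
      mul_dvd_mul hdc hdp
    have h2 : (3 : ℤ) ^ (V + 2 * m) ∣ (3 : ℤ) ^ (V - v3s) * (3 : ℤ) ^ (m * s) := by
      rw [← pow_add]
      exact pow_dvd_pow 3 hexp
    have h3 := h2.trans h1
    have e : (-I) ^ t * P ^ s * (Nat.choose k' t : ℤ)
        = (-I) ^ t * ((Nat.choose k' t : ℤ) * P ^ s) := by ring
    rw [e]
    exact Dvd.dvd.mul_left h3 _
  -- final assembly
  have hexp2 : (P - I) ^ k'
      = (∑ t ∈ Finset.range (k2 + 1), (-I) ^ t * P ^ (k' - t) * (Nat.choose k' t : ℤ))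
        + (k' : ℤ) * P * I ^ (k' - 1) - I ^ k' := by
    rw [hbin, hsplit, hT1, hT2]
    ring
  have egoal : (I ^ k' + (P - I) ^ k') - (k' : ℤ) * P * I ^ (k' - 1)
      = ∑ t ∈ Finset.range (k2 + 1), (-I) ^ t * P ^ (k' - t) * (Nat.choose k' t : ℤ) := by
    rw [hexp2]
    ring
  have hfin : (3 : ℤ) ^ (V + 2 * m) ∣ (I ^ k' + (P - I) ^ k') - (k' : ℤ) * P * I ^ (k' - 1) := by
    rw [egoal]
    exact hsum
  exact hfin
lemma partA (x : ℕ) (hx : 0 < x) : padicValNat 3 (T 1 x) = padicValNat 3 x := by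
  have h := two_T1 x
  have e1 : padicValNat 3 (2 * T 1 x) = padicValNat 3 2 + padicValNat 3 (T 1 x) :=
    padicValNat.mul (by norm_num) (by have := T_pos 1 x hx; omega)
  have e2 : padicValNat 3 (x * (3 * x + 1)) = padicValNat 3 x + padicValNat 3 (3 * x + 1) :=
    padicValNat.mul (by omega) (by omega)
  have e3 : padicValNat 3 2 = 0 := padicValNat.eq_zero_of_not_dvd (by norm_num)
  have e4 : padicValNat 3 (3 * x + 1) = 0 := padicValNat.eq_zero_of_not_dvd (by omega)
  rw [h] at e1
  omega

lemma partD (x : ℕ) (hx : 0 < x) :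
    padicValNat 3 (T 3 x) = padicValNat 3 (x ^ 2 * (5 * x + 3)) := by
  have h : 4 * T 3 x = (x ^ 2 * (5 * x + 3)) * (3 * x + 1) := by
    rw [four_T3]
    ring
  have e1 : padicValNat 3 (4 * T 3 x) = padicValNat 3 4 + padicValNat 3 (T 3 x) :=
    padicValNat.mul (by norm_num) (by have := T_pos 3 x hx; omega)
  have e2 : padicValNat 3 ((x ^ 2 * (5 * x + 3)) * (3 * x + 1))
      = padicValNat 3 (x ^ 2 * (5 * x + 3)) + padicValNat 3 (3 * x + 1) :=
    padicValNat.mul (by positivity) (by omega)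
  have e3 : padicValNat 3 4 = 0 := padicValNat.eq_zero_of_not_dvd (by norm_num)
  have e4 : padicValNat 3 (3 * x + 1) = 0 := padicValNat.eq_zero_of_not_dvd (by omega)
  rw [h] at e1
  omega

lemma partC (x k : ℕ) (hx : 0 < x) (hk4 : 3 < k) (hkodd : Odd k) (h0 : x % 3 = 0) :
    padicValNat 3 (T k x) = padicValNat 3 (k * x ^ 2) := by
  have ha1 : 1 ≤ padicValNat 3 x := one_le_padicValNat_of_dvd hx.ne' (by omega)
  obtain ⟨α, hα⟩ : ∃ α, padicValNat 3 x = α + 1 := ⟨padicValNat 3 x - 1, by omega⟩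
  set V := padicValNat 3 k with hVdef
  have hdvd : 3 ^ (α + 1) ∣ x := by rw [← hα]; exact pow_padicValNat_dvd
  have hVdvd : 3 ^ V ∣ k := pow_padicValNat_dvd
  set y := x / 3 ^ (α + 1) with hydef
  have hxy : 3 ^ (α + 1) * y = x := Nat.mul_div_cancel' hdvd
  have hy3 : ¬ 3 ∣ y := by
    intro hcon
    have hstep : 3 ^ (α + 1 + 1) ∣ x := by
      have h3 : 3 ^ (α + 1) * 3 ∣ 3 ^ (α + 1) * y := Nat.mul_dvd_mul_left _ hcon
      rw [hxy] at h3
      rwa [pow_succ]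
    rw [← hα] at hstep
    exact pow_succ_padicValNat_not_dvd (by omega) hstep
  set κ := k / 3 ^ V with hκdef
  have hkκ : 3 ^ V * κ = k := Nat.mul_div_cancel' hVdvd
  have hκ3 : ¬ 3 ∣ κ := by
    intro hcon
    have hstep : 3 ^ (V + 1) ∣ k := by
      have h3 : 3 ^ V * 3 ∣ 3 ^ V * κ := Nat.mul_dvd_mul_left _ hcon
      rw [hkκ] at h3
      rwa [pow_succ]
    exact pow_succ_padicValNat_not_dvd (by omega) hstep
  -- the reflected sum identity
  have hrefl1 : (∑ i ∈ Finset.Ico (x + 1) (2 * x + 1), (3 * x - i) ^ k)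
      = ∑ j ∈ Finset.Ico x (2 * x), j ^ k := by
    refine Finset.sum_nbij' (fun i => 3 * x - i) (fun j => 3 * x - j) ?_ ?_ ?_ ?_ ?_ <;>
      intro a ha <;> simp only [Finset.mem_Ico] at ha ⊢ <;> try omega
  have hrefl2 : (∑ j ∈ Finset.Ico x (2 * x), j ^ k) + (2 * x) ^ k
      = x ^ k + T k x := by
    have e1 : (∑ j ∈ Finset.Ico x (2 * x + 1), j ^ k)
        = (∑ j ∈ Finset.Ico x (2 * x), j ^ k) + (2 * x) ^ k :=
      Finset.sum_Ico_succ_top (by omega) _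
    have e2 : (∑ j ∈ Finset.Ico x (2 * x + 1), j ^ k)
        = x ^ k + ∑ j ∈ Finset.Ico (x + 1) (2 * x + 1), j ^ k :=
      Finset.sum_eq_sum_Ico_succ_bot (by omega) _
    rw [TIco]
    omega
  have key : 2 * T k x + x ^ k
      = (∑ i ∈ Finset.Ico (x + 1) (2 * x + 1), (i ^ k + (3 * x - i) ^ k)) + (2 * x) ^ k := by
    rw [Finset.sum_add_distrib, hrefl1]
    have e3 : T k x = ∑ i ∈ Finset.Ico (x + 1) (2 * x + 1), i ^ k := TIco k x
    omega
  -- termwise congruence via err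
  have hp3 : (3 : ℕ) ^ (α + 1 + 1) ∣ 3 * x := by
    refine ⟨y, ?_⟩
    rw [← hxy]
    ring
  have hSmod : (∑ i ∈ Finset.Ico (x + 1) (2 * x + 1), (i ^ k + (3 * x - i) ^ k))
      ≡ (∑ i ∈ Finset.Ico (x + 1) (2 * x + 1), k * (3 * x) * i ^ (k - 1))
        [MOD 3 ^ (V + 2 * (α + 1 + 1))] := by
    refine sum_modEq _ _ _ fun i hi => ?_
    simp only [Finset.mem_Ico] at hi
    exact err k V (α + 1 + 1) (3 * x) i hVdvd hkodd (by omega) hp3 (by omega) (by omega)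
  have hfactor : (∑ i ∈ Finset.Ico (x + 1) (2 * x + 1), k * (3 * x) * i ^ (k - 1))
      = (k * (3 * x)) * T (k - 1) x := by
    rw [← Finset.mul_sum, ← TIco]
  have hkeven : Even (k - 1) := Nat.Odd.sub_odd hkodd odd_one
  have hTk1 := T_even_main (k - 1) x (α + 1) (by omega) hkeven (by omega) hdvd
  -- hTk1 : T (k-1) x ≡ (x / 3 ^ (α+1)) * (2 * 3 ^ (α + 1 - 1)) [MOD 3 ^ (α+1)]
  have hTk1' : T (k - 1) x ≡ y * (2 * 3 ^ α) [MOD 3 ^ (α + 1)] := by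
    have e : (α + 1) - 1 = α := by omega
    rwa [e] at hTk1
  have hmul := hTk1'.mul_left' (c := k * (3 * x))
  have hMdvd : (3 : ℕ) ^ (V + 2 * α + 3) ∣ (k * (3 * x)) * 3 ^ (α + 1) := by
    refine ⟨κ * y, ?_⟩
    rw [← hkκ, ← hxy]
    ring
  have eqv : k * (3 * x) * (y * (2 * 3 ^ α)) = 2 * (κ * y ^ 2) * 3 ^ (V + 2 * α + 2) := by
    rw [← hkκ, ← hxy]
    ring
  have hmain : (k * (3 * x)) * T (k - 1) x
      ≡ 2 * (κ * y ^ 2) * 3 ^ (V + 2 * α + 2) [MOD 3 ^ (V + 2 * α + 3)] := by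
    have h1 := hmul.of_dvd hMdvd
    rwa [eqv] at h1
  -- small terms vanish
  have hVk3 : V + 3 ≤ k := kbound k V hk4 hVdvd
  have hexp : V + 2 * α + 3 ≤ (α + 1) * k := by
    have h1 : (α + 1) * (V + 3) ≤ (α + 1) * k := Nat.mul_le_mul_left _ hVk3
    nlinarith
  have hxk : (3 : ℕ) ^ (V + 2 * α + 3) ∣ x ^ k := by
    have h1 : (3 : ℕ) ^ (V + 2 * α + 3) ∣ 3 ^ ((α + 1) * k) := pow_dvd_pow 3 hexp
    have h2 : (3 : ℕ) ^ ((α + 1) * k) ∣ x ^ k := by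
      refine ⟨y ^ k, ?_⟩
      rw [← hxy, mul_pow, pow_mul]
    exact h1.trans h2
  have h2xk : (3 : ℕ) ^ (V + 2 * α + 3) ∣ (2 * x) ^ k := by
    rw [mul_pow]
    exact Dvd.dvd.mul_left hxk _
  -- combine
  have hS : (∑ i ∈ Finset.Ico (x + 1) (2 * x + 1), (i ^ k + (3 * x - i) ^ k))
      ≡ 2 * (κ * y ^ 2) * 3 ^ (V + 2 * α + 2) [MOD 3 ^ (V + 2 * α + 3)] := by
    have h1 := hSmod.of_dvd (pow_dvd_pow 3 (by omega : V + 2 * α + 3 ≤ V + 2 * (α + 1 + 1)))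
    rw [hfactor] at h1
    exact h1.trans hmain
  have htot : 2 * T k x ≡ 2 * ((κ * y ^ 2) * 3 ^ (V + 2 * α + 2)) [MOD 3 ^ (V + 2 * α + 3)] := by
    calc 2 * T k x = 2 * T k x + 0 := by ring
      _ ≡ 2 * T k x + x ^ k [MOD 3 ^ (V + 2 * α + 3)] := ((mq_zero hxk).add_left _).symm
      _ = (∑ i ∈ Finset.Ico (x + 1) (2 * x + 1), (i ^ k + (3 * x - i) ^ k)) + (2 * x) ^ k := key
      _ ≡ 2 * (κ * y ^ 2) * 3 ^ (V + 2 * α + 2) + (2 * x) ^ k [MOD 3 ^ (V + 2 * α + 3)] :=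
          hS.add_right _
      _ ≡ 2 * (κ * y ^ 2) * 3 ^ (V + 2 * α + 2) + 0 [MOD 3 ^ (V + 2 * α + 3)] :=
          (mq_zero h2xk).add_left _
      _ = 2 * ((κ * y ^ 2) * 3 ^ (V + 2 * α + 2)) := by ring
  have hcop : Nat.gcd (3 ^ (V + 2 * α + 3)) 2 = 1 := Nat.Coprime.pow_left _ (by decide)
  have hT : T k x ≡ (κ * y ^ 2) * 3 ^ (V + 2 * α + 2) [MOD 3 ^ (V + 2 * α + 2 + 1)] := by
    have := Nat.ModEq.cancel_left_of_coprime hcop htot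
    rwa [show V + 2 * α + 2 + 1 = V + 2 * α + 3 by omega]
  have hval := val_eq (T_pos k x hx) hT (by
    intro hcon
    rcases (Nat.Prime.dvd_mul Nat.prime_three).mp hcon with h | h
    · exact hκ3 h
    · rcases (Nat.Prime.dvd_mul Nat.prime_three).mp (by
        rwa [show y ^ 2 = y * y by ring] at h) with h' | h' <;> exact hy3 h')
  -- compute padicValNat 3 (k * x^2)
  have hvk : padicValNat 3 (k * x ^ 2) = V + 2 * (α + 1) := by
    rw [padicValNat.mul (by omega) (by positivity), padicValNat.pow x 2, hα]
  rw [hval, hvk]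
  omega
theorem stmt_19 (x k : ℕ) (hx : 0 < x) (hk : 0 < k)
    (h59 : x % 9 = 5 → ¬ Even k) :
    (k = 1 → padicValNat 3 (T k x) = padicValNat 3 x) ∧
    (x % 3 = 0 → 2 ≤ k → Even k → padicValNat 3 (T k x) = padicValNat 3 x - 1) ∧
    (x % 3 = 0 → 3 < k → Odd k → padicValNat 3 (T k x) = padicValNat 3 (k * x ^ 2)) ∧
    (x % 3 = 0 → k = 3 →
      padicValNat 3 (T k x) = padicValNat 3 (x ^ 2 * (5 * x + 3))) ∧
    ((x % 3 = 1 ∨ x % 3 = 2) → 3 ≤ k → Odd k → padicValNat 3 (T k x) = 0) ∧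
    ((x % 9 = 2 ∨ x % 9 = 8) → 2 ≤ k → Even k → padicValNat 3 (T k x) = 0) ∧
    (x % 3 = 1 → 2 ≤ k → Even k →
      padicValNat 3 (T k x) = padicValNat 3 (2 * x + 1) - 1) := by
  refine ⟨?_, ?_, ?_, ?_, ?_, ?_, ?_⟩
  · intro h1
    subst h1
    exact partA x hx
  · intro h0 h2 he
    exact partB x k hx h2 he h0
  · intro h0 h3 ho
    exact partC x k hx h3 ho h0
  · intro h0 h3
    subst h3
    exact partD x hx
  · intro h1 _ ho
    exact partE x k hx ho h1
  · intro h9 h2 he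
    exact partF x k hx h2 he h9
  · intro h1 h2 he
    exact partG x k hx h2 he h1
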